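/- arXiv:2011.08572 — 3 statements merged into one kernel-verified Lean document; each statement's English description precedes it below -/
import Mathlib

section
/- Let π be a probability distribution on {0,1}^k with π(x) > 0 for every x. Then for every ε > 0 there exist m ≤ 2^k, weight vectors w₁, …, w_m ∈ ℝ^k and biases c₁, …, c_m ∈ ℝ such that the function f(x) = ∏_{i=1}^m (1 + exp(w_i·x + c_i)) (the output of a Restricted Boltzmann Machine with k visible and m hidden nodes) satisfies ‖ f/∑_y f(y) − π ‖_TV ≤ ε. -/
open scoped BigOperators

namespace StoqPaper

/-- The real value (0 or 1) of a bit. -/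
def bv (b : Bool) : ℝ := if b then 1 else 0

/-- The ℓ² norm of a finitely-indexed family of complex numbers. -/
noncomputable def l2norm {α : Type*} [Fintype α] (v : α → ℂ) : ℝ :=
  Real.sqrt (∑ x, Complex.normSq (v x))

/-- The inner product ⟨v|w⟩ (antilinear in the first slot). -/
noncomputable def qInner {α : Type*} [Fintype α] (v w : α → ℂ) : ℂ :=
  ∑ x, (starRingEnd ℂ) (v x) * w x

/-- `‖M‖_op ≤ J` for the ℓ²-operator norm, stated via its universal property. -/
def OpNormLE {α : Type*} [Fintype α] (M : Matrix α α ℂ) (J : ℝ) : Prop :=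
  ∀ v : α → ℂ, l2norm (M.mulVec v) ≤ J * l2norm v

/-- The uniform superposition state |+⟩ on qubits indexed by `ι`. -/
noncomputable def plusState (ι : Type*) [Fintype ι] : (ι → Bool) → ℂ :=
  fun _ => ((Real.sqrt (2 ^ Fintype.card ι) : ℝ)⁻¹ : ℝ)

variable {ι : Type*} [Fintype ι] [DecidableEq ι]

/-- A matrix on qubits indexed by `ι` acts nontrivially only on the qubit set `S`:
entries vanish unless the two configurations agree outside `S`, and entries depend
only on the restrictions of the two configurations to `S`. -/
def LocalOn (S : Finset ι) (M : Matrix (ι → Bool) (ι → Bool) ℂ) : Prop :=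
  (∀ x y : ι → Bool, (∃ i, i ∉ S ∧ x i ≠ y i) → M x y = 0) ∧
  (∀ x y x' y' : ι → Bool, (∀ i ∈ S, x i = x' i) → (∀ i ∈ S, y i = y' i) →
    (∀ i, i ∉ S → x i = y i) → (∀ i, i ∉ S → x' i = y' i) → M x y = M x' y')

/-- A matrix is `k`-local if it acts nontrivially on at most `k` qubits. -/
def KLocal (k : ℕ) (M : Matrix (ι → Bool) (ι → Bool) ℂ) : Prop :=
  ∃ S : Finset ι, S.card ≤ k ∧ LocalOn S M

/-- A `k`-local matrix all of whose local-matrix entries are real and strictly positive. -/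
def KLocalPositive (k : ℕ) (M : Matrix (ι → Bool) (ι → Bool) ℂ) : Prop :=
  ∃ S : Finset ι, S.card ≤ k ∧ LocalOn S M ∧
    ∀ x y : ι → Bool, (∀ i, i ∉ S → x i = y i) → (M x y).im = 0 ∧ 0 < (M x y).re

/-- Stoquastic entries: all entries real, and off-diagonal entries nonpositive. -/
def StoqEntries (M : Matrix (ι → Bool) (ι → Bool) ℂ) : Prop :=
  ∀ x y : ι → Bool, (M x y).im = 0 ∧ (x ≠ y → (M x y).re ≤ 0)

/-- `μ` is a (real) eigenvalue of `M`. -/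
def IsEig {α : Type*} [Fintype α] (M : Matrix α α ℂ) (μ : ℝ) : Prop :=
  ∃ v : α → ℂ, v ≠ 0 ∧ M.mulVec v = (μ : ℂ) • v

/-- `E` is the smallest (real) eigenvalue of `M` (the ground energy). -/
def IsGroundEnergy {α : Type*} [Fintype α] (M : Matrix α α ℂ) (E : ℝ) : Prop :=
  IsEig M E ∧ ∀ μ : ℝ, IsEig M μ → E ≤ μ

/-- Every eigenvalue of `M` is either the ground energy `E` or at least `E + Δ`:
the energy gap of `M` is at least `Δ`. -/
def GapAtLeast {α : Type*} [Fintype α] (M : Matrix α α ℂ) (E Δ : ℝ) : Prop :=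
  ∀ μ : ℝ, IsEig M μ → μ = E ∨ E + Δ ≤ μ

/-- `P` is the orthogonal projector onto the `E`-eigenspace of `M`:
it is Hermitian, idempotent, and its fixed space is exactly that eigenspace. -/
def IsGroundProjector {α : Type*} [Fintype α] (M P : Matrix α α ℂ) (E : ℝ) : Prop :=
  P.IsHermitian ∧ P * P = P ∧
    ∀ v : α → ℂ, M.mulVec v = (E : ℂ) • v ↔ P.mulVec v = v

/-- A function of bit configurations depends only on the bits in `S`. -/
def DependsOnlyOn (S : Finset ι) (f : (ι → Bool) → ℝ) : Prop :=
  ∀ y y' : ι → Bool, (∀ i ∈ S, y i = y' i) → f y = f y'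

/-- The Gibbs distribution (at temperature 1) of a classical Hamiltonian. -/
noncomputable def gibbs (Hc : (ι → Bool) → ℝ) (y : ι → Bool) : ℝ :=
  Real.exp (-(Hc y)) / ∑ z, Real.exp (-(Hc z))

/-- Total variation distance between two real functions on a finite set. -/
noncomputable def tvDist {α : Type*} [Fintype α] (p q : α → ℝ) : ℝ :=
  (1 / 2) * ∑ x, |p x - q x|

/-- A Hyper Boltzmann Machine with `n` visible nodes, `m` hidden nodes
and `T` hyperedges. -/
structure HBM (n m T : ℕ) where
  /-- the set of nodes of each hyperedge -/
  edge : Fin T → Finset (Fin n ⊕ Fin m)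
  /-- the local energy of each hyperedge -/
  F : Fin T → ((Fin n ⊕ Fin m) → Bool) → ℝ
  /-- each local energy depends only on the bits at the nodes of its hyperedge -/
  F_local : ∀ t, DependsOnlyOn (edge t) (F t)

namespace HBM

variable {n m T : ℕ}

/-- An HBM is `k`-local if every hyperedge contains at most `k` nodes. -/
def IsKLocal (M : HBM n m T) (k : ℕ) : Prop := ∀ t, (M.edge t).card ≤ k

/-- The number of hyperedges containing a given node. -/
def deg (M : HBM n m T) (v : Fin n ⊕ Fin m) : ℕ :=
  (Finset.univ.filter (fun t => v ∈ M.edge t)).card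

/-- The output of the HBM: hidden variables summed out of the Boltzmann weight. -/
noncomputable def output (M : HBM n m T) (x : Fin n → Bool) : ℝ :=
  ∑ h : Fin m → Bool, Real.exp (-(∑ t, M.F t (Sum.elim x h)))

/-- The probability distribution of the HBM on visible configurations. -/
noncomputable def dist (M : HBM n m T) (x : Fin n → Bool) : ℝ :=
  M.output x / ∑ y, M.output y

/-- The HBM represents the state `ψ` to precision `ε` in distribution. -/
noncomputable def RepDist (M : HBM n m T) (ψ : (Fin n → Bool) → ℂ) (ε : ℝ) : Prop :=
  tvDist M.dist (fun x => Complex.normSq (ψ x)) ≤ ε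

end HBM

/-- A Deep Boltzmann Machine with `n` visible nodes, `m₁` middle-layer hidden nodes and
`m₂` deep-layer hidden nodes; edges run only between consecutive layers. -/
structure DBM (n m₁ m₂ : ℕ) where
  /-- biases of the visible nodes -/
  a : Fin n → ℝ
  /-- biases of the middle hidden nodes -/
  b : Fin m₁ → ℝ
  /-- biases of the deep hidden nodes -/
  c : Fin m₂ → ℝ
  /-- weights between visible and middle layers -/
  W : Fin n → Fin m₁ → ℝ
  /-- weights between middle and deep layers -/
  U : Fin m₁ → Fin m₂ → ℝ

namespace DBM

variable {n m₁ m₂ : ℕ}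

/-- The energy of a configuration of a DBM. -/
noncomputable def energy (D : DBM n m₁ m₂) (x : Fin n → Bool) (h : Fin m₁ → Bool)
    (g : Fin m₂ → Bool) : ℝ :=
  -(∑ i, D.a i * bv (x i)) - (∑ j, D.b j * bv (h j)) - (∑ l, D.c l * bv (g l))
    - (∑ i, ∑ j, D.W i j * bv (x i) * bv (h j))
    - (∑ j, ∑ l, D.U j l * bv (h j) * bv (g l))

/-- The output of a DBM. -/
noncomputable def output (D : DBM n m₁ m₂) (x : Fin n → Bool) : ℝ :=
  ∑ h : Fin m₁ → Bool, ∑ g : Fin m₂ → Bool, Real.exp (-(D.energy x h g))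

/-- The probability distribution of a DBM on visible configurations. -/
noncomputable def dist (D : DBM n m₁ m₂) (x : Fin n → Bool) : ℝ :=
  D.output x / ∑ y, D.output y

open Classical in
/-- The number of connections (degree) of a visible node. -/
noncomputable def degVis (D : DBM n m₁ m₂) (i : Fin n) : ℕ :=
  (Finset.univ.filter (fun j => D.W i j ≠ 0)).card

open Classical in
/-- The number of connections (degree) of a middle-layer hidden node. -/
noncomputable def degMid (D : DBM n m₁ m₂) (j : Fin m₁) : ℕ :=
  (Finset.univ.filter (fun i => D.W i j ≠ 0)).card
    + (Finset.univ.filter (fun l => D.U j l ≠ 0)).card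

open Classical in
/-- The number of connections (degree) of a deep-layer hidden node. -/
noncomputable def degDeep (D : DBM n m₁ m₂) (l : Fin m₂) : ℕ :=
  (Finset.univ.filter (fun j => D.U j l ≠ 0)).card

end DBM

/-- A (general) Boltzmann machine on `n` visible and `m` hidden nodes: a graph with
real biases on the nodes and real weights on the edges. -/
structure BM (n m : ℕ) where
  /-- biases -/
  a : (Fin n ⊕ Fin m) → ℝ
  /-- weights (zero weight = no edge) -/
  W : (Fin n ⊕ Fin m) → (Fin n ⊕ Fin m) → ℝ
  /-- weights are symmetric -/
  symm : ∀ u v, W u v = W v u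
  /-- no self-loops -/
  diag : ∀ u, W u u = 0

namespace BM

variable {n m : ℕ}

/-- The energy of a configuration of a Boltzmann machine. -/
noncomputable def energy (B : BM n m) (y : (Fin n ⊕ Fin m) → Bool) : ℝ :=
  -(∑ v, B.a v * bv (y v)) - (1 / 2) * ∑ u, ∑ v, B.W u v * bv (y u) * bv (y v)

/-- The output of a Boltzmann machine. -/
noncomputable def output (B : BM n m) (x : Fin n → Bool) : ℝ :=
  ∑ h : Fin m → Bool, Real.exp (-(B.energy (Sum.elim x h)))

/-- The probability distribution of a Boltzmann machine on visible configurations. -/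
noncomputable def dist (B : BM n m) (x : Fin n → Bool) : ℝ :=
  B.output x / ∑ y, B.output y

open Classical in
/-- The number of connections (degree) of a node. -/
noncomputable def deg (B : BM n m) (v : Fin n ⊕ Fin m) : ℕ :=
  (Finset.univ.filter (fun u => B.W v u ≠ 0)).card

end BM

end StoqPaper

namespace StoqPaper

/-- The bound `η^(−1/2) L^(5/2) J^(3/2) Δ^(−3/2) ε^(−1/2) (log(η⁻¹ε⁻¹))^(3/2)` appearing in the
theorems about general stoquastic Hamiltonians. -/
noncomputable def stoqBound (η L J Δ ε : ℝ) : ℝ :=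
  η ^ (-(1 : ℝ) / 2) * L ^ ((5 : ℝ) / 2) * J ^ ((3 : ℝ) / 2) * Δ ^ (-(3 : ℝ) / 2) *
    ε ^ (-(1 : ℝ) / 2) * Real.log (η⁻¹ * ε⁻¹) ^ ((3 : ℝ) / 2)

/-- The bound `L³ J Δ⁻¹ log(η⁻¹ε⁻¹)` appearing in the theorems about stoquastic
frustration-free Hamiltonians. -/
noncomputable def sffBound (L J Δ η ε : ℝ) : ℝ :=
  L ^ (3 : ℕ) * J * Δ⁻¹ * Real.log (η⁻¹ * ε⁻¹)

/-- The marginal of a distribution on `n + m` bits onto the first `n` bits. -/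
noncomputable def marginalFst {n m : ℕ} (p : ((Fin n ⊕ Fin m) → Bool) → ℝ)
    (x : Fin n → Bool) : ℝ :=
  ∑ h : Fin m → Bool, p (Sum.elim x h)

end StoqPaper


namespace RBMAux

open StoqPaper Filter

variable {k : ℕ}

/-- Hamming distance as a real number. -/
noncomputable def hd (x y : Fin k → Bool) : ℝ :=
  ∑ j, (bv (x j) + bv (y j) - 2 * bv (x j) * bv (y j))

lemma hd_self (x : Fin k → Bool) : hd x x = 0 := by
  unfold hd
  apply Finset.sum_eq_zero
  intro j _
  unfold bv
  by_cases h : x j <;> simp [h] <;> ring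

lemma one_le_hd {x y : Fin k → Bool} (h : x ≠ y) : 1 ≤ hd x y := by
  obtain ⟨j, hj⟩ : ∃ j, x j ≠ y j := Function.ne_iff.mp h
  have h1 : ∀ i, (0:ℝ) ≤ bv (x i) + bv (y i) - 2 * bv (x i) * bv (y i) := by
    intro i
    unfold bv
    by_cases h1 : x i <;> by_cases h2 : y i <;> simp [h1, h2] <;> norm_num
  have h2 : (1:ℝ) ≤ bv (x j) + bv (y j) - 2 * bv (x j) * bv (y j) := by
    unfold bv
    by_cases h1 : x j <;> by_cases h2 : y j <;> simp_all <;> norm_num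
  calc (1:ℝ) ≤ bv (x j) + bv (y j) - 2 * bv (x j) * bv (y j) := h2
    _ ≤ hd x y := Finset.single_le_sum (fun i _ => h1 i) (Finset.mem_univ j)

/-- The RBM output with sharpness parameter `a`. -/
noncomputable def F (π : (Fin k → Bool) → ℝ) (a : ℝ) (x : Fin k → Bool) : ℝ :=
  ∏ z : Fin k → Bool, (1 + Real.exp (a * (1/2 - hd x z)) * π z)

lemma F_pos {π : (Fin k → Bool) → ℝ} (hpos : ∀ x, 0 < π x) (a : ℝ) (x : Fin k → Bool) :
    0 < F π a x :=
  Finset.prod_pos fun z _ => by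
    have := hpos z
    have := Real.exp_pos (a * (1/2 - hd x z))
    nlinarith

lemma tendsto_factor {c : ℝ} (hc : c ≤ -(1/2)) :
    Tendsto (fun a : ℝ => Real.exp (a * c)) atTop (nhds 0) := by
  have h1 : Tendsto (fun a : ℝ => a * c) atTop atBot :=
    Tendsto.atTop_mul_const_of_neg (by linarith) tendsto_id
  exact Real.tendsto_exp_atBot.comp h1

lemma tendsto_G (π : (Fin k → Bool) → ℝ) (hpos : ∀ x, 0 < π x) (x : Fin k → Bool) :
    Tendsto (fun a => F π a x * Real.exp (a * (-(1/2)))) atTop (nhds (π x)) := by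
  have key : ∀ a : ℝ, F π a x * Real.exp (a * (-(1/2)))
      = (Real.exp (a * (-(1/2))) + π x)
        * ∏ z ∈ Finset.univ.erase x, (1 + Real.exp (a * (1/2 - hd x z)) * π z) := by
    intro a
    rw [F, ← Finset.mul_prod_erase Finset.univ _ (Finset.mem_univ x), hd_self]
    have h1 : Real.exp (a * (1/2 - 0)) * Real.exp (a * (-(1/2))) = 1 := by
      rw [← Real.exp_add, show a * (1/2 - 0) + a * (-(1/2)) = 0 by ring, Real.exp_zero]
    linear_combination (π x * ∏ z ∈ Finset.univ.erase x,
      (1 + Real.exp (a * (1/2 - hd x z)) * π z)) * h1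
  have hprod : Tendsto (fun a : ℝ => ∏ z ∈ Finset.univ.erase x,
      (1 + Real.exp (a * (1/2 - hd x z)) * π z)) atTop (nhds 1) := by
    have := tendsto_finset_prod (f := fun (z : Fin k → Bool) (a : ℝ) =>
        1 + Real.exp (a * (1/2 - hd x z)) * π z) (x := atTop)
        (a := fun _ => (1:ℝ)) (Finset.univ.erase x) ?_
    · simpa using this
    · intro z hz
      have hzx : x ≠ z := fun h => (Finset.mem_erase.mp hz).1 h.symm
      have hc : 1/2 - hd x z ≤ -(1/2) := by
        have := one_le_hd hzx
        linarith
      have := (tendsto_factor hc).mul_const (π z)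
      have := tendsto_const_nhds (x := (1:ℝ)) (f := atTop (α := ℝ)) |>.add this
      simpa using this
  have hfirst : Tendsto (fun a : ℝ => Real.exp (a * (-(1/2))) + π x) atTop (nhds (π x)) := by
    have := (tendsto_factor (le_refl (-(1/2)))).add_const (π x)
    simpa using this
  have := hfirst.mul hprod
  rw [mul_one] at this
  exact this.congr fun a => (key a).symm

end RBMAux

open StoqPaper
theorem statement_15 (k : ℕ) (π : ((Fin k) → Bool) → ℝ)
    (hpos : ∀ x, 0 < π x) (hsum : ∑ x, π x = 1) :
    ∀ ε : ℝ, 0 < ε →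
      ∃ (m : ℕ), m ≤ 2 ^ k ∧
        ∃ (w : Fin m → Fin k → ℝ) (c : Fin m → ℝ),
          ∀ f : ((Fin k) → Bool) → ℝ,
            f = (fun x => ∏ i, (1 + Real.exp ((∑ j, w i j * bv (x j)) + c i))) →
            tvDist (fun x => f x / ∑ y, f y) π ≤ ε := by
  classical
  intro ε hε
  set e : Fin (2 ^ k) ≃ (Fin k → Bool) :=
    (Fintype.equivFinOfCardEq (by simp) : (Fin k → Bool) ≃ Fin (2 ^ k)).symm with he
  -- limit of total variation distance
  have hsumG : Filter.Tendsto
      (fun a : ℝ => ∑ y, RBMAux.F π a y * Real.exp (a * (-(1/2)))) Filter.atTop (nhds 1) := by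
    have := tendsto_finset_sum (f := fun (y : Fin k → Bool) (a : ℝ) =>
        RBMAux.F π a y * Real.exp (a * (-(1/2)))) (x := Filter.atTop)
        (a := fun y => π y) Finset.univ (fun y _ => RBMAux.tendsto_G π hpos y)
    rwa [hsum] at this
  have hratio : ∀ x, Filter.Tendsto
      (fun a : ℝ => RBMAux.F π a x / ∑ y, RBMAux.F π a y) Filter.atTop (nhds (π x)) := by
    intro x
    have h := ((RBMAux.tendsto_G π hpos x).div hsumG one_ne_zero)
    rw [div_one] at h
    refine h.congr fun a => ?_
    simp only [Pi.div_apply]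
    rw [← Finset.sum_mul, mul_div_mul_right _ _ (Real.exp_ne_zero _)]
  have htv : Filter.Tendsto
      (fun a : ℝ => tvDist (fun x => RBMAux.F π a x / ∑ y, RBMAux.F π a y) π)
      Filter.atTop (nhds 0) := by
    have h : ∀ x : Fin k → Bool, Filter.Tendsto
        (fun a : ℝ => |RBMAux.F π a x / (∑ y, RBMAux.F π a y) - π x|)
        Filter.atTop (nhds 0) := by
      intro x
      have := ((hratio x).sub_const (π x)).abs
      simpa using this
    have hs := tendsto_finset_sum (x := Filter.atTop) (a := fun _ => (0:ℝ))
        Finset.univ (fun x _ => h x)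
    have := hs.const_mul (1/2 : ℝ)
    simpa [tvDist] using this
  obtain ⟨a, ha⟩ := (htv.eventually_le_const hε).exists
  refine ⟨2 ^ k, le_refl _,
    fun i j => a * (2 * bv (e i j) - 1),
    fun i => a * (1/2 - ∑ j, bv (e i j)) + Real.log (π (e i)), ?_⟩
  intro f hf
  have hf2 : ∀ x : Fin k → Bool, f x = RBMAux.F π a x := by
    intro x
    rw [hf]
    rw [RBMAux.F, ← Equiv.prod_comp e
      (fun z => 1 + Real.exp (a * (1/2 - RBMAux.hd x z)) * π z)]
    apply Finset.prod_congr rfl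
    intro i _
    have hexp : (∑ j, (a * (2 * bv (e i j) - 1)) * bv (x j))
        + (a * (1/2 - ∑ j, bv (e i j)) + Real.log (π (e i)))
        = a * (1/2 - RBMAux.hd x (e i)) + Real.log (π (e i)) := by
      have e1 : (∑ j, (a * (2 * bv (e i j) - 1)) * bv (x j))
          = a * ∑ j, (2 * bv (e i j) - 1) * bv (x j) := by
        rw [Finset.mul_sum]
        exact Finset.sum_congr rfl fun j _ => (mul_assoc _ _ _)
      have e2 : RBMAux.hd x (e i)
          = (∑ j, bv (e i j)) - ∑ j, (2 * bv (e i j) - 1) * bv (x j) := by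
        rw [RBMAux.hd, ← Finset.sum_sub_distrib]
        exact Finset.sum_congr rfl fun j _ => by ring
      rw [e1, e2]; ring
    rw [hexp, Real.exp_add, Real.exp_log (hpos (e i))]
  have hEq : (fun x => f x / ∑ y, f y)
      = fun x => RBMAux.F π a x / ∑ y, RBMAux.F π a y := by
    funext x
    rw [hf2 x]
    congr 1
    exact Finset.sum_congr rfl fun y _ => hf2 y
  rw [hEq]
  exact ha
end

section
/- There is a universal constant C > 0 such that the following holds. Let H₁, …, H_L be complex square matrices of the same size with ‖H_i‖_op ≤ J for all i, let H = H₁ + ⋯ + H_L, and let δ > 0 satisfy δ L J ≤ 1. Then the second-order Trotter product satisfies ‖ e^(−δH_L/2) ⋯ e^(−δH₁/2) · e^(−δH₁/2) ⋯ e^(−δH_L/2) − e^(−δH) ‖_op ≤ C δ³ L³ J³. -/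
open scoped BigOperators

set_option linter.unusedSectionVars false

open NormedSpace (exp)

namespace TrotterAux

variable {A : Type*} [NormedRing A] [NormedAlgebra ℂ A] [CompleteSpace A] [NormOneClass A]

/-- second order coefficient of a product of exponentials -/
noncomputable def Q : List A → A
  | [] => 0
  | a :: l => (2⁻¹ : ℂ) • (a * a) + a * l.sum + Q l

lemma Q_nil : Q ([] : List A) = 0 := rfl

lemma Q_cons (a : A) (l : List A) :
    Q (a :: l) = (2⁻¹ : ℂ) • (a * a) + a * l.sum + Q l := rfl

lemma Q_append (l₁ l₂ : List A) :
    Q (l₁ ++ l₂) = Q l₁ + l₁.sum * l₂.sum + Q l₂ := by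
  induction l₁ with
  | nil => simp [Q]
  | cons a l ih =>
    simp only [List.cons_append, Q_cons, ih, List.sum_cons, List.sum_append, mul_add, add_mul]
    abel

lemma Q_reverse (l : List A) : Q l + Q l.reverse = l.sum * l.sum := by
  induction l with
  | nil => simp [Q]
  | cons a l ih =>
    rw [List.reverse_cons, Q_append, Q_cons]
    have h2 : (2⁻¹ : ℂ) • (a * a) + (2⁻¹ : ℂ) • (a * a) = a * a := by
      rw [← add_smul]; norm_num
    have hrs : l.reverse.sum = l.sum := List.sum_reverse l
    simp only [Q_cons, Q_nil, List.sum_cons, List.sum_nil, mul_zero, add_zero, hrs]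
    calc ((2⁻¹:ℂ) • (a * a) + a * l.sum + Q l) +
          (Q l.reverse + l.sum * a + (2⁻¹:ℂ) • (a * a))
        = ((2⁻¹:ℂ) • (a * a) + (2⁻¹:ℂ) • (a * a)) + (a * l.sum + l.sum * a)
            + (Q l + Q l.reverse) := by abel
      _ = (a + l.sum) * (a + l.sum) := by
          rw [h2, ih]; noncomm_ring

lemma list_sum_norm_nonneg (l : List A) : 0 ≤ (l.map norm).sum := by
  apply List.sum_nonneg
  intro x hx
  simp only [List.mem_map] at hx
  obtain ⟨a, -, rfl⟩ := hx
  exact norm_nonneg a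

lemma norm_list_sum_le (l : List A) : ‖l.sum‖ ≤ (l.map norm).sum := by
  induction l with
  | nil => simp
  | cons a l ih =>
    simp only [List.sum_cons, List.map_cons]
    exact (norm_add_le _ _).trans (by gcongr)

lemma norm_Q_le (l : List A) : ‖Q l‖ ≤ (l.map norm).sum ^ 2 := by
  induction l with
  | nil => simp [Q]
  | cons a l ih =>
    simp only [Q_cons, List.map_cons, List.sum_cons]
    have h1 : ‖(2⁻¹ : ℂ) • (a * a)‖ ≤ 2⁻¹ * (‖a‖ * ‖a‖) := by
      rw [norm_smul]
      have : ‖(2⁻¹ : ℂ)‖ = 2⁻¹ := by simp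
      rw [this]
      gcongr
      exact norm_mul_le a a
    have h2 : ‖a * l.sum‖ ≤ ‖a‖ * (l.map norm).sum := by
      refine (norm_mul_le _ _).trans ?_
      have := norm_list_sum_le l
      gcongr

    have hb : (0:ℝ) ≤ ‖a‖ := norm_nonneg a
    have hσ : (0:ℝ) ≤ (l.map norm).sum := list_sum_norm_nonneg l
    calc ‖(2⁻¹:ℂ) • (a * a) + a * l.sum + Q l‖
        ≤ ‖(2⁻¹:ℂ) • (a * a)‖ + ‖a * l.sum‖ + ‖Q l‖ := norm_add₃_le
      _ ≤ 2⁻¹ * (‖a‖ * ‖a‖) + ‖a‖ * (l.map norm).sum + (l.map norm).sum ^ 2 := by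
          gcongr
      _ ≤ (‖a‖ + (l.map norm).sum) ^ 2 := by nlinarith

end TrotterAux

namespace TrotterAux2

open TrotterAux Nat

variable {A : Type*} [NormedRing A] [NormedAlgebra ℂ A] [CompleteSpace A] [NormOneClass A]

lemma norm_exp_le_exp (a : A) : ‖exp a‖ ≤ Real.exp ‖a‖ := by
  have hs : Summable (fun n : ℕ => ((n ! : ℂ))⁻¹ • a ^ n) :=
    NormedSpace.expSeries_summable' a
  have hsn : Summable (fun n : ℕ => ‖((n ! : ℂ))⁻¹ • a ^ n‖) :=
    NormedSpace.norm_expSeries_summable' a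
  have hg : Summable (fun n : ℕ => ((n ! : ℝ))⁻¹ • ‖a‖ ^ n) :=
    NormedSpace.expSeries_summable' (𝕂 := ℝ) ‖a‖
  rw [NormedSpace.exp_eq_tsum ℂ]
  refine (norm_tsum_le_tsum_norm hsn).trans ?_
  have hterm : ∀ n : ℕ, ‖((n ! : ℂ))⁻¹ • a ^ n‖ ≤ ((n ! : ℝ))⁻¹ • ‖a‖ ^ n := by
    intro n
    rw [norm_smul, norm_inv, Complex.norm_natCast, smul_eq_mul]
    have h2 : ‖a ^ n‖ ≤ ‖a‖ ^ n := norm_pow_le a n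
    have h3 : (0:ℝ) ≤ ((n ! : ℝ))⁻¹ := by positivity
    nlinarith [norm_nonneg (a ^ n)]
  refine (Summable.tsum_le_tsum hterm hsn hg).trans ?_
  rw [Real.exp_eq_exp_ℝ, NormedSpace.exp_eq_tsum ℝ]

lemma norm_exp_sub_quadratic_le (a : A) (h : ‖a‖ ≤ 1) :
    ‖exp a - (1 + a + (2⁻¹ : ℂ) • (a * a))‖ ≤ 3 * ‖a‖ ^ 3 := by
  have hs : Summable (fun n : ℕ => ((n ! : ℂ))⁻¹ • a ^ n) :=
    NormedSpace.expSeries_summable' a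
  have key := Summable.sum_add_tsum_nat_add 3 hs
  have hexp : exp a = ∑' n : ℕ, ((n ! : ℂ))⁻¹ • a ^ n := by
    rw [NormedSpace.exp_eq_tsum ℂ]
  have hsum3 : ∑ i ∈ Finset.range 3, ((i ! : ℂ))⁻¹ • a ^ i
      = 1 + a + (2⁻¹ : ℂ) • (a * a) := by
    rw [Finset.sum_range_succ, Finset.sum_range_succ, Finset.sum_range_one]
    norm_num [Nat.factorial, pow_two]
  have hdiff : exp a - (1 + a + (2⁻¹ : ℂ) • (a * a))
      = ∑' n : ℕ, (((n + 3)! : ℂ))⁻¹ • a ^ (n + 3) := by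
    rw [hexp, ← key, hsum3]
    abel
  rw [hdiff]
  have hsn : Summable (fun n : ℕ => ‖(((n + 3)! : ℂ))⁻¹ • a ^ (n + 3)‖) := by
    have h0 : Summable (fun n : ℕ => ‖((n ! : ℂ))⁻¹ • a ^ n‖) :=
      NormedSpace.norm_expSeries_summable' a
    exact (summable_nat_add_iff 3).mpr h0
  have hg : Summable (fun n : ℕ => ‖a‖ ^ 3 * ((n ! : ℝ))⁻¹) := by
    have h0 : Summable (fun n : ℕ => ((n ! : ℝ))⁻¹) := by
      have := Real.summable_pow_div_factorial 1
      refine this.congr fun n => ?_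
      simp [one_div]
    exact h0.mul_left _
  have hterm : ∀ n : ℕ, ‖(((n + 3)! : ℂ))⁻¹ • a ^ (n + 3)‖ ≤ ‖a‖ ^ 3 * ((n ! : ℝ))⁻¹ := by
    intro n
    rw [norm_smul, norm_inv, Complex.norm_natCast]
    have h1 : ‖a ^ (n + 3)‖ ≤ ‖a‖ ^ 3 := by
      refine (norm_pow_le a (n + 3)).trans ?_
      calc ‖a‖ ^ (n + 3) = ‖a‖ ^ n * ‖a‖ ^ 3 := by ring
        _ ≤ 1 * ‖a‖ ^ 3 := by
            gcongr
            exact pow_le_one₀ (norm_nonneg a) h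
        _ = ‖a‖ ^ 3 := one_mul _
    have h2 : (((n + 3)! : ℝ))⁻¹ ≤ ((n ! : ℝ))⁻¹ := by
      have hle : (n ! : ℝ) ≤ ((n + 3)! : ℝ) := by
        exact_mod_cast Nat.factorial_le (by omega)
      have hpos : (0:ℝ) < (n ! : ℝ) := by positivity
      exact inv_anti₀ hpos hle
    calc (((n + 3)! : ℝ))⁻¹ * ‖a ^ (n + 3)‖ ≤ ((n ! : ℝ))⁻¹ * ‖a‖ ^ 3 := by
          have := norm_nonneg (a ^ (n + 3))
          have hpos : (0:ℝ) ≤ ((n ! : ℝ))⁻¹ := by positivity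
          nlinarith
      _ = ‖a‖ ^ 3 * ((n ! : ℝ))⁻¹ := by ring
  refine (norm_tsum_le_tsum_norm hsn).trans ?_
  refine (Summable.tsum_le_tsum hterm hsn hg).trans ?_
  rw [tsum_mul_left]
  have hE : ∑' n : ℕ, ((n ! : ℝ))⁻¹ = Real.exp 1 := by
    rw [Real.exp_eq_exp_ℝ, NormedSpace.exp_eq_tsum ℝ]
    simp
  rw [hE]
  have : Real.exp 1 ≤ 3 := by
    have := Real.exp_one_lt_d9
    linarith
  calc ‖a‖ ^ 3 * Real.exp 1 ≤ ‖a‖ ^ 3 * 3 := by gcongr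
    _ = 3 * ‖a‖ ^ 3 := by ring

end TrotterAux2

namespace TrotterAux3

open TrotterAux TrotterAux2

variable {A : Type*} [NormedRing A] [NormedAlgebra ℂ A] [CompleteSpace A] [NormOneClass A]

lemma trotter_err (l : List A) (h : (l.map norm).sum ≤ 1) :
    ‖(l.map exp).prod - (1 + l.sum + Q l)‖
      ≤ 9 * Real.exp ((l.map norm).sum) * ((l.map norm).sum) ^ 3 := by
  induction l with
  | nil => simp [Q]
  | cons a l ih =>
    set b : ℝ := ‖a‖ with hb_def
    set σ : ℝ := (l.map norm).sum with hσ_def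
    have hb : 0 ≤ b := norm_nonneg a
    have hσ : 0 ≤ σ := list_sum_norm_nonneg l
    have hbσ : b + σ ≤ 1 := by simpa [List.map_cons, List.sum_cons] using h
    have hσ1 : σ ≤ 1 := by linarith
    have hb1 : b ≤ 1 := by linarith
    have ihe := ih (by linarith)
    -- notation
    set S : A := l.sum with hS_def
    set Ql : A := Q l with hQl_def
    set P : A := 1 + S + Ql with hP_def
    set Pi : A := (l.map exp).prod with hPi_def
    set u : A := (2⁻¹ : ℂ) • (a * a) with hu_def
    set R : A := exp a - (1 + a + u) with hR_def
    have hE : exp a = 1 + a + u + R := by rw [hR_def]; abel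
    have hprod : ((a :: l).map exp).prod = exp a * Pi := by
      simp [hPi_def]
    have hP' : 1 + (a :: l).sum + Q (a :: l) = 1 + (a + S) + (u + a * S + Ql) := by
      simp [Q_cons, hu_def, hS_def, hQl_def]
    have hsplit : exp a * Pi - (1 + (a :: l).sum + Q (a :: l))
        = exp a * (Pi - P) + (R * P + a * Ql + u * S + u * Ql) := by
      rw [hP', hP_def, hE]
      noncomm_ring
    -- norms
    have hnormS : ‖S‖ ≤ σ := norm_list_sum_le l
    have hnormQl : ‖Ql‖ ≤ σ ^ 2 := norm_Q_le l
    have hnormP : ‖P‖ ≤ 3 := by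
      have h1 : ‖P‖ ≤ ‖(1 : A)‖ + ‖S‖ + ‖Ql‖ := norm_add₃_le
      rw [norm_one] at h1
      nlinarith
    have hnormu : ‖u‖ ≤ 2⁻¹ * (b * b) := by
      rw [hu_def, norm_smul]
      have : ‖(2⁻¹ : ℂ)‖ = 2⁻¹ := by simp
      rw [this]
      have := norm_mul_le a a
      nlinarith
    have hnormR : ‖R‖ ≤ 3 * b ^ 3 := norm_exp_sub_quadratic_le a hb1
    have hnormexp : ‖exp a‖ ≤ Real.exp b := norm_exp_le_exp a
    have hQσ : ((a :: l).map norm).sum = b + σ := by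
      simp [List.map_cons, List.sum_cons, hb_def, hσ_def]
    rw [hprod, hsplit, hQσ]
    have hterm1 : ‖exp a * (Pi - P)‖ ≤ Real.exp b * (9 * Real.exp σ * σ ^ 3) := by
      refine (norm_mul_le _ _).trans ?_
      have h9 : (0:ℝ) ≤ 9 * Real.exp σ * σ ^ 3 := by positivity
      have hexpb : (0:ℝ) ≤ Real.exp b := (Real.exp_pos b).le
      exact mul_le_mul hnormexp ihe (norm_nonneg _) hexpb
    have hterm2 : ‖R * P + a * Ql + u * S + u * Ql‖
        ≤ 9 * b ^ 3 + b * σ ^ 2 + 2⁻¹ * (b * b) * σ + 2⁻¹ * (b * b) * σ ^ 2 := by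
      have t1 : ‖R * P‖ ≤ 3 * b ^ 3 * 3 :=
        (norm_mul_le _ _).trans (mul_le_mul hnormR hnormP (norm_nonneg _) (by positivity))
      have t2 : ‖a * Ql‖ ≤ b * σ ^ 2 :=
        (norm_mul_le _ _).trans (mul_le_mul le_rfl hnormQl (norm_nonneg _) hb)
      have t3 : ‖u * S‖ ≤ 2⁻¹ * (b * b) * σ :=
        (norm_mul_le _ _).trans (mul_le_mul hnormu hnormS (norm_nonneg _) (by positivity))
      have t4 : ‖u * Ql‖ ≤ 2⁻¹ * (b * b) * σ ^ 2 :=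
        (norm_mul_le _ _).trans (mul_le_mul hnormu hnormQl (norm_nonneg _) (by positivity))
      calc ‖R * P + a * Ql + u * S + u * Ql‖
          ≤ ‖R * P + a * Ql + u * S‖ + ‖u * Ql‖ := norm_add_le _ _
        _ ≤ (‖R * P‖ + ‖a * Ql‖ + ‖u * S‖) + ‖u * Ql‖ := by
            gcongr
            exact norm_add₃_le
        _ ≤ (3 * b ^ 3 * 3 + b * σ ^ 2 + 2⁻¹ * (b * b) * σ) + 2⁻¹ * (b * b) * σ ^ 2 := by
            gcongr
        _ = 9 * b ^ 3 + b * σ ^ 2 + 2⁻¹ * (b * b) * σ + 2⁻¹ * (b * b) * σ ^ 2 := by ring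
    refine (norm_add_le _ _).trans ?_
    refine (add_le_add hterm1 hterm2).trans ?_
    have hexpadd : Real.exp b * Real.exp σ = Real.exp (b + σ) := (Real.exp_add b σ).symm
    have hexp1 : (1:ℝ) ≤ Real.exp (b + σ) := by
      rw [← Real.exp_zero]
      exact Real.exp_le_exp.mpr (by linarith)
    have hexppos : (0:ℝ) < Real.exp (b + σ) := Real.exp_pos _
    have expand : 9 * Real.exp (b + σ) * (b + σ) ^ 3
        = 9 * Real.exp (b + σ) * σ ^ 3
          + 9 * Real.exp (b + σ) * (b ^ 3 + 3 * b ^ 2 * σ + 3 * b * σ ^ 2) := by ring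
    rw [expand]
    have key1 : Real.exp b * (9 * Real.exp σ * σ ^ 3) = 9 * Real.exp (b + σ) * σ ^ 3 := by
      rw [← hexpadd]; ring
    rw [key1]
    have key2 : 9 * b ^ 3 + b * σ ^ 2 + 2⁻¹ * (b * b) * σ + 2⁻¹ * (b * b) * σ ^ 2
        ≤ 9 * Real.exp (b + σ) * (b ^ 3 + 3 * b ^ 2 * σ + 3 * b * σ ^ 2) := by
      nlinarith [mul_nonneg hb hσ, mul_nonneg (mul_nonneg hb hb) hσ,
        mul_nonneg hb (mul_nonneg hσ hσ), pow_nonneg hb 3]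
    linarith

end TrotterAux3

namespace TrotterAux4

open TrotterAux TrotterAux2 TrotterAux3

variable {A : Type*} [NormedRing A] [NormedAlgebra ℂ A] [CompleteSpace A] [NormOneClass A]

lemma trotter_main {L : ℕ} (δ J : ℝ) (G : Fin L → A) (hG : ∀ i, ‖G i‖ ≤ J)
    (hδ : 0 < δ) (hJ : 0 ≤ J) (h1 : δ * L * J ≤ 1) :
    ‖(List.ofFn fun i => exp (((-(δ / 2) : ℝ) : ℂ) • G i)).reverse.prod *
        (List.ofFn fun i => exp (((-(δ / 2) : ℝ) : ℂ) • G i)).prod -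
        exp (((-δ : ℝ) : ℂ) • ∑ i, G i)‖ ≤ 28 * (δ * L * J) ^ 3 := by
  set c : ℂ := ((-(δ / 2) : ℝ) : ℂ) with hc_def
  set T : A := ∑ i, G i with hT_def
  set x : A := ((-δ : ℝ) : ℂ) • T with hx_def
  set l₀ : List A := List.ofFn (fun i => c • G i) with hl0_def
  set l : List A := l₀.reverse ++ l₀ with hl_def
  have hmap : (List.ofFn fun i => exp (c • G i)) = l₀.map exp := by
    rw [hl0_def, List.map_ofFn]
    rfl
  -- the product equals the product over l
  have hprodeq : (List.ofFn fun i => exp (c • G i)).reverse.prod *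
      (List.ofFn fun i => exp (c • G i)).prod = (l.map exp).prod := by
    rw [hmap, hl_def, List.map_append, List.prod_append, List.map_reverse]
  -- sums
  have hsum0 : l₀.sum = c • T := by
    rw [hl0_def, List.sum_ofFn, hT_def, Finset.smul_sum]
  have hcc : c + c = ((-δ : ℝ) : ℂ) := by
    rw [hc_def]
    push_cast
    ring
  have hsum : l.sum = x := by
    rw [hl_def, List.sum_append, List.sum_reverse, hsum0, ← add_smul, hcc, hx_def]
  -- Q of l
  have hQ : Q l = l₀.sum * l₀.sum + l₀.sum * l₀.sum := by
    rw [hl_def, Q_append, List.sum_reverse]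
    have := Q_reverse l₀
    calc Q l₀.reverse + l₀.sum * l₀.sum + Q l₀
        = (Q l₀ + Q l₀.reverse) + l₀.sum * l₀.sum := by abel
      _ = l₀.sum * l₀.sum + l₀.sum * l₀.sum := by rw [this]
  have hQx : Q l = (2⁻¹ : ℂ) • (x * x) := by
    rw [hQ, hsum0]
    have hxc : x = (c + c) • T := by rw [hcc, hx_def]
    rw [hxc]
    rw [smul_mul_smul_comm, smul_mul_smul_comm, ← smul_assoc]
    have : (2⁻¹ : ℂ) • ((c + c) * (c + c)) = (2 : ℂ) * (c * c) := by
      simp only [smul_eq_mul]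
      ring
    rw [this]
    rw [two_mul, add_smul]
  -- σ bound
  have hσ0 : (l₀.map norm).sum = ∑ i, ‖c • G i‖ := by
    rw [hl0_def, List.map_ofFn, List.sum_ofFn]
    rfl
  have hnc : ‖c‖ = δ / 2 := by
    rw [hc_def, Complex.norm_real, Real.norm_eq_abs, abs_of_nonpos (by linarith), neg_neg]
  have hσ0le : (l₀.map norm).sum ≤ L * (δ / 2 * J) := by
    rw [hσ0]
    calc ∑ i, ‖c • G i‖ ≤ ∑ _i : Fin L, δ / 2 * J := by
          refine Finset.sum_le_sum fun i _ => ?_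
          rw [norm_smul, hnc]
          have := hG i
          have h2 : (0:ℝ) ≤ δ / 2 := by linarith
          nlinarith [norm_nonneg (G i)]
      _ = L * (δ / 2 * J) := by simp [Finset.sum_const, mul_comm]
  have hσl : (l.map norm).sum ≤ δ * L * J := by
    rw [hl_def, List.map_append, List.sum_append, List.map_reverse, List.sum_reverse]
    have := hσ0le
    calc (l₀.map norm).sum + (l₀.map norm).sum ≤ L * (δ / 2 * J) + L * (δ / 2 * J) := by
          linarith
      _ = δ * L * J := by ring
  have hσnn : 0 ≤ (l.map norm).sum := list_sum_norm_nonneg l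
  have hσ1 : (l.map norm).sum ≤ 1 := hσl.trans h1
  -- first piece
  have herr := trotter_err l hσ1
  have hP : 1 + l.sum + Q l = 1 + x + (2⁻¹ : ℂ) • (x * x) := by rw [hsum, hQx]
  -- ‖x‖ bound
  have hnx : ‖x‖ ≤ δ * L * J := by
    rw [hx_def, norm_smul]
    have h1' : ‖((-δ : ℝ) : ℂ)‖ = δ := by
      rw [Complex.norm_real, Real.norm_eq_abs, abs_of_nonpos (by linarith), neg_neg]
    rw [h1']
    have h2 : ‖T‖ ≤ L * J := by
      rw [hT_def]
      refine (norm_sum_le _ _).trans ?_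
      calc ∑ i, ‖G i‖ ≤ ∑ _i : Fin L, J := Finset.sum_le_sum fun i _ => hG i
        _ = L * J := by simp [Finset.sum_const, mul_comm]
    calc δ * ‖T‖ ≤ δ * (L * J) := by nlinarith
      _ = δ * L * J := by ring
  have hnx1 : ‖x‖ ≤ 1 := hnx.trans h1
  have hexp := norm_exp_sub_quadratic_le x hnx1
  -- combine
  have hs : (0:ℝ) ≤ δ * L * J := by positivity
  have triangle : ‖(l.map exp).prod - exp x‖
      ≤ ‖(l.map exp).prod - (1 + l.sum + Q l)‖
        + ‖exp x - (1 + x + (2⁻¹ : ℂ) • (x * x))‖ := by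
    rw [hP]
    have : (l.map exp).prod - exp x
        = ((l.map exp).prod - (1 + x + (2⁻¹ : ℂ) • (x * x)))
          - (exp x - (1 + x + (2⁻¹ : ℂ) • (x * x))) := by abel
    rw [this]
    exact norm_sub_le _ _
  rw [hprodeq]
  refine triangle.trans ?_
  have b1 : ‖(l.map exp).prod - (1 + l.sum + Q l)‖ ≤ 25 * (δ * L * J) ^ 3 := by
    refine herr.trans ?_
    have he : Real.exp ((l.map norm).sum) ≤ Real.exp 1 := Real.exp_le_exp.mpr hσ1
    have he3 : Real.exp 1 ≤ 25 / 9 := by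
      have := Real.exp_one_lt_d9
      linarith
    have hpow : ((l.map norm).sum) ^ 3 ≤ (δ * L * J) ^ 3 := by
      gcongr
    calc 9 * Real.exp ((l.map norm).sum) * ((l.map norm).sum) ^ 3
        ≤ 9 * (25 / 9) * (δ * L * J) ^ 3 := by
          have hexnn : (0:ℝ) ≤ Real.exp ((l.map norm).sum) := (Real.exp_pos _).le
          have hpnn : (0:ℝ) ≤ ((l.map norm).sum) ^ 3 := by positivity
          nlinarith [pow_nonneg hs 3]
      _ = 25 * (δ * L * J) ^ 3 := by ring
  have b2 : ‖exp x - (1 + x + (2⁻¹ : ℂ) • (x * x))‖ ≤ 3 * (δ * L * J) ^ 3 := by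
    refine hexp.trans ?_
    have : ‖x‖ ^ 3 ≤ (δ * L * J) ^ 3 := by gcongr
    nlinarith [pow_nonneg (norm_nonneg x) 3]
  linarith

end TrotterAux4


namespace TrotterBridge

open StoqPaper

lemma l2norm_eq_norm {d : ℕ} (v : Fin d → ℂ) :
    l2norm v = ‖(WithLp.equiv 2 (Fin d → ℂ)).symm v‖ := by
  rw [l2norm, EuclideanSpace.norm_eq]
  congr 1
  refine Finset.sum_congr rfl fun i _ => ?_
  show Complex.normSq (v i) = ‖v i‖ ^ 2
  rw [Complex.sq_norm]

lemma mulVec_norm_eq {d : ℕ} (M : Matrix (Fin d) (Fin d) ℂ) (v : Fin d → ℂ) :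
    l2norm (M.mulVec v)
      = ‖Matrix.toEuclideanCLM (𝕜 := ℂ) M ((WithLp.equiv 2 (Fin d → ℂ)).symm v)‖ := by
  rw [WithLp.equiv_symm_apply, Matrix.toEuclideanCLM_toLp, l2norm_eq_norm]
  rfl

lemma opNormLE_of_norm_le {d : ℕ} (M : Matrix (Fin d) (Fin d) ℂ) (K : ℝ)
    (h : ‖Matrix.toEuclideanCLM (𝕜 := ℂ) M‖ ≤ K) : OpNormLE M K := by
  intro v
  rw [mulVec_norm_eq, l2norm_eq_norm]
  calc ‖Matrix.toEuclideanCLM (𝕜 := ℂ) M ((WithLp.equiv 2 (Fin d → ℂ)).symm v)‖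
      ≤ ‖Matrix.toEuclideanCLM (𝕜 := ℂ) M‖ * ‖(WithLp.equiv 2 (Fin d → ℂ)).symm v‖ :=
        (Matrix.toEuclideanCLM (𝕜 := ℂ) M).le_opNorm _
    _ ≤ K * ‖(WithLp.equiv 2 (Fin d → ℂ)).symm v‖ :=
        mul_le_mul_of_nonneg_right h (norm_nonneg _)

lemma norm_le_of_opNormLE {d : ℕ} (M : Matrix (Fin d) (Fin d) ℂ) {J : ℝ} (hJ : 0 ≤ J)
    (h : OpNormLE M J) : ‖Matrix.toEuclideanCLM (𝕜 := ℂ) M‖ ≤ J := by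
  refine ContinuousLinearMap.opNorm_le_bound _ hJ fun x => ?_
  have hx := h ((WithLp.equiv 2 (Fin d → ℂ)) x)
  rwa [mulVec_norm_eq, l2norm_eq_norm, (WithLp.equiv 2 (Fin d → ℂ)).symm_apply_apply] at hx

end TrotterBridge


open StoqPaper
theorem statement_17 :
    ∃ C : ℝ, 0 < C ∧
      ∀ (d L : ℕ) (J δ : ℝ) (H : Fin L → Matrix (Fin d) (Fin d) ℂ),
        (∀ i, OpNormLE (H i) J) → 0 < δ → δ * L * J ≤ 1 →
        OpNormLE
          ((List.ofFn (fun i => NormedSpace.exp (((-(δ / 2) : ℝ) : ℂ) • H i))).reverse.prod *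
            (List.ofFn (fun i => NormedSpace.exp (((-(δ / 2) : ℝ) : ℂ) • H i))).prod -
            NormedSpace.exp (((-δ : ℝ) : ℂ) • ∑ i, H i))
          (C * δ ^ 3 * L ^ 3 * J ^ 3) := by
  refine ⟨28, by norm_num, ?_⟩
  intro d L J δ H hH hδ h1
  by_cases hd : d = 0
  · subst hd
    intro v
    have h0 : ∀ w : Fin 0 → ℂ, l2norm w = 0 := by
      intro w
      simp [l2norm]
    rw [h0, h0, mul_zero]
  by_cases hL : L = 0
  · subst hL
    have hz : (List.ofFn (fun i : Fin 0 => NormedSpace.exp (((-(δ / 2) : ℝ) : ℂ) • H i))).reverse.prod *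
          (List.ofFn (fun i : Fin 0 => NormedSpace.exp (((-(δ / 2) : ℝ) : ℂ) • H i))).prod -
          NormedSpace.exp (((-δ : ℝ) : ℂ) • ∑ i : Fin 0, H i) = 0 := by
      simp [NormedSpace.exp_zero]
    rw [hz]
    intro v
    have h0 : l2norm ((0 : Matrix (Fin d) (Fin d) ℂ).mulVec v) = 0 := by
      simp [l2norm, Matrix.zero_mulVec]
    rw [h0]
    have : ((28 : ℝ) * δ ^ 3 * (0 : ℕ) ^ 3 * J ^ 3) = 0 := by norm_num
    rw [this, zero_mul]
  -- main case
  have hdpos : 0 < d := Nat.pos_of_ne_zero hd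
  have hLpos : 0 < L := Nat.pos_of_ne_zero hL
  haveI : Nonempty (Fin d) := ⟨⟨0, hdpos⟩⟩
  haveI : Nontrivial (EuclideanSpace ℂ (Fin d)) := by
    refine ⟨(WithLp.equiv 2 (Fin d → ℂ)).symm 0, (WithLp.equiv 2 (Fin d → ℂ)).symm 1, ?_⟩
    intro hcontra
    have := (WithLp.equiv 2 (Fin d → ℂ)).symm.injective hcontra
    have h01 := congrFun this ⟨0, hdpos⟩
    simp at h01
  -- J is nonnegative
  have hJ : 0 ≤ J := by
    have hv1 : l2norm (fun _ : Fin d => (1 : ℂ)) = Real.sqrt d := by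
      simp [l2norm]
    have hle := hH ⟨0, hLpos⟩ (fun _ => 1)
    rw [hv1] at hle
    have hnn : 0 ≤ l2norm ((H ⟨0, hLpos⟩).mulVec fun _ => 1) := by
      rw [l2norm]; exact Real.sqrt_nonneg _
    have hsd : 0 < Real.sqrt d := Real.sqrt_pos.mpr (by exact_mod_cast hdpos)
    nlinarith
  -- transport to continuous linear maps
  letI : SeminormedRing (Matrix (Fin d) (Fin d) ℂ) := Matrix.linftyOpSemiNormedRing
  letI : NormedRing (Matrix (Fin d) (Fin d) ℂ) := Matrix.linftyOpNormedRing
  letI : NormedAlgebra ℂ (Matrix (Fin d) (Fin d) ℂ) := Matrix.linftyOpNormedAlgebra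
  have hlin : IsLinearMap ℂ (fun M : Matrix (Fin d) (Fin d) ℂ =>
      Matrix.toEuclideanCLM (𝕜 := ℂ) M) :=
    ⟨fun a b => map_add _ a b, fun c a => map_smul _ c a⟩
  have hcont : Continuous (fun M : Matrix (Fin d) (Fin d) ℂ =>
      Matrix.toEuclideanCLM (𝕜 := ℂ) M) :=
    LinearMap.continuous_of_finiteDimensional (hlin.mk' _)
  have hfn : ∀ M : Matrix (Fin d) (Fin d) ℂ,
      Matrix.toEuclideanCLM (𝕜 := ℂ) (NormedSpace.exp M)
        = NormedSpace.exp (Matrix.toEuclideanCLM (𝕜 := ℂ) M) := fun M =>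
    NormedSpace.map_exp_of_mem_ball (𝕂 := ℂ) (Matrix.toEuclideanCLM (𝕜 := ℂ) : Matrix (Fin d) (Fin d) ℂ ≃⋆ₐ[ℂ] _)
      hcont M ((NormedSpace.expSeries_radius_eq_top ℂ (Matrix (Fin d) (Fin d) ℂ)).symm ▸ edist_lt_top _ _)
  have hG' : ∀ i, ‖Matrix.toEuclideanCLM (𝕜 := ℂ) (H i)‖ ≤ J := fun i =>
    TrotterBridge.norm_le_of_opNormLE (H i) hJ (hH i)
  have key := TrotterAux4.trotter_main (A := EuclideanSpace ℂ (Fin d) →L[ℂ] EuclideanSpace ℂ (Fin d))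
    δ J (fun i => Matrix.toEuclideanCLM (𝕜 := ℂ) (H i)) hG' hδ hJ h1
  have h2 : (List.ofFn fun i => NormedSpace.exp (((-(δ / 2) : ℝ) : ℂ) • H i)).map
        (Matrix.toEuclideanCLM (𝕜 := ℂ))
      = List.ofFn fun i =>
          NormedSpace.exp (((-(δ / 2) : ℝ) : ℂ) • Matrix.toEuclideanCLM (𝕜 := ℂ) (H i)) := by
    rw [List.map_ofFn]
    congr 1
    funext i
    show Matrix.toEuclideanCLM (𝕜 := ℂ) (NormedSpace.exp (((-(δ / 2) : ℝ) : ℂ) • H i)) = _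
    rw [hfn, map_smul]
  have hψT : Matrix.toEuclideanCLM (𝕜 := ℂ)
      ((List.ofFn (fun i => NormedSpace.exp (((-(δ / 2) : ℝ) : ℂ) • H i))).reverse.prod *
        (List.ofFn (fun i => NormedSpace.exp (((-(δ / 2) : ℝ) : ℂ) • H i))).prod -
        NormedSpace.exp (((-δ : ℝ) : ℂ) • ∑ i, H i))
      = (List.ofFn fun i =>
            NormedSpace.exp (((-(δ / 2) : ℝ) : ℂ) • Matrix.toEuclideanCLM (𝕜 := ℂ) (H i))).reverse.prod *
          (List.ofFn fun i =>
            NormedSpace.exp (((-(δ / 2) : ℝ) : ℂ) • Matrix.toEuclideanCLM (𝕜 := ℂ) (H i))).prod -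
          NormedSpace.exp (((-δ : ℝ) : ℂ) • ∑ i, Matrix.toEuclideanCLM (𝕜 := ℂ) (H i)) := by
    rw [map_sub, map_mul, map_list_prod, map_list_prod, List.map_reverse, h2, hfn, map_smul,
      map_sum]
  refine TrotterBridge.opNormLE_of_norm_le _ _ ?_
  rw [hψT]
  calc ‖_‖ ≤ 28 * (δ * L * J) ^ 3 := key
    _ = 28 * δ ^ 3 * (L : ℝ) ^ 3 * J ^ 3 := by ring
end

section
/- Let H be a real symmetric 2^n × 2^n matrix, indexed by x, y ∈ {0,1}^n, whose off-diagonal entries are nonpositive (H_{xy} ≤ 0 for all x ≠ y), and let Π be the orthogonal projector onto the eigenspace of the smallest eigenvalue of H. Then this ground eigenspace contains a nonzero vector with all entries nonnegative, and consequently ⟨+|Π|+⟩ ≥ 2^(−n), i.e. η = √(⟨+|Π|+⟩) ≥ 2^(−n/2). -/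
open scoped BigOperators

open StoqPaper
open scoped Matrix in
theorem statement_19 (n : ℕ) (H P : Matrix ((Fin n) → Bool) ((Fin n) → Bool) ℝ)
    (hsym : H.IsSymm) (hoff : ∀ x y, x ≠ y → H x y ≤ 0) (E₀ : ℝ)
    (hE₀ : (∃ v : ((Fin n) → Bool) → ℝ, v ≠ 0 ∧ H.mulVec v = E₀ • v) ∧
      ∀ μ : ℝ, (∃ v : ((Fin n) → Bool) → ℝ, v ≠ 0 ∧ H.mulVec v = μ • v) → E₀ ≤ μ)
    (hP : P.IsSymm ∧ P * P = P ∧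
      ∀ v : ((Fin n) → Bool) → ℝ, H.mulVec v = E₀ • v ↔ P.mulVec v = v) :
    (∃ v : ((Fin n) → Bool) → ℝ, v ≠ 0 ∧ H.mulVec v = E₀ • v ∧ ∀ x, 0 ≤ v x) ∧
    ∀ plus : ((Fin n) → Bool) → ℝ, plus = (fun _ => (Real.sqrt (2 ^ n))⁻¹) →
      ((2 : ℝ) ^ n)⁻¹ ≤ dotProduct plus (P.mulVec plus) ∧
      (Real.sqrt (2 ^ n))⁻¹ ≤ Real.sqrt (dotProduct plus (P.mulVec plus)) := by
  classical
  obtain ⟨⟨v, hv0, hveig⟩, hmin⟩ := hE₀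
  obtain ⟨hPsym, hPP, hPfix⟩ := hP
  set A : Matrix ((Fin n) → Bool) ((Fin n) → Bool) ℝ := H - E₀ • 1 with hAdef
  have hAmul : ∀ u, A *ᵥ u = H *ᵥ u - E₀ • u := by
    intro u
    simp [hAdef, Matrix.sub_mulVec, Matrix.smul_mulVec, Matrix.one_mulVec]
  have hAherm : A.IsHermitian := by
    have : A.IsSymm := by
      unfold Matrix.IsSymm
      rw [hAdef, Matrix.transpose_sub, hsym.eq, Matrix.transpose_smul, Matrix.transpose_one]
    ext x y
    simpa [Matrix.conjTranspose_apply] using congrFun (congrFun this x) y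
  have hApsd : A.PosSemidef := by
    apply hAherm.posSemidef_iff_eigenvalues_nonneg.mpr
    intro i
    have heig := hAherm.mulVec_eigenvectorBasis i
    have hne : (⇑(hAherm.eigenvectorBasis i) : ((Fin n) → Bool) → ℝ) ≠ 0 := by
      intro h
      exact hAherm.eigenvectorBasis.orthonormal.ne_zero i (by ext j; exact congrFun h j)
    have hHeig : H *ᵥ ⇑(hAherm.eigenvectorBasis i)
        = (hAherm.eigenvalues i + E₀) • ⇑(hAherm.eigenvectorBasis i) := by
      rw [hAmul] at heig
      have := sub_eq_iff_eq_add.mp heig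
      rw [this, add_smul]
    have := hmin (hAherm.eigenvalues i + E₀) ⟨_, hne, hHeig⟩
    simp only [Pi.zero_apply]
    linarith
  set w : ((Fin n) → Bool) → ℝ := fun x => |v x| with hwdef
  have hwnn : ∀ x, 0 ≤ w x := fun x => abs_nonneg _
  have hw0 : w ≠ 0 := by
    obtain ⟨x0, hx0⟩ := Function.ne_iff.mp hv0
    intro h
    exact hx0 (abs_eq_zero.mp (congrFun h x0))
  have key : ∀ x y, w x * (A x y * w y) ≤ v x * (A x y * v y) := by
    intro x y
    rcases eq_or_ne x y with rfl | hxy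
    · have h1 : w x * w x = v x * v x := abs_mul_abs_self _
      exact le_of_eq (by linear_combination A x x * h1)
    · have h1 : A x y ≤ 0 := by
        have h2 := hoff x y hxy
        have : A x y = H x y := by
          simp [hAdef, Matrix.sub_apply, Matrix.one_apply_ne hxy]
        linarith [this ▸ h2]
      have h2 : v x * v y ≤ w x * w y := by
        simpa [hwdef, abs_mul] using le_abs_self (v x * v y)
      calc w x * (A x y * w y) = A x y * (w x * w y) := by ring
        _ ≤ A x y * (v x * v y) := mul_le_mul_of_nonpos_left h2 h1
        _ = v x * (A x y * v y) := by ring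
  have hvform : v ⬝ᵥ A *ᵥ v = 0 := by
    rw [hAmul, hveig, sub_self, dotProduct_zero]
  have hle : w ⬝ᵥ A *ᵥ w ≤ v ⬝ᵥ A *ᵥ v := by
    simp only [dotProduct, Matrix.mulVec]
    refine Finset.sum_le_sum fun x _ => ?_
    rw [Finset.mul_sum, Finset.mul_sum]
    exact Finset.sum_le_sum fun y _ => key x y
  have hzero : w ⬝ᵥ A *ᵥ w = 0 := le_antisymm (hvform ▸ hle) (by simpa using hApsd.dotProduct_mulVec_nonneg w)
  have hAw : A *ᵥ w = 0 := (hApsd.dotProduct_mulVec_zero_iff w).mp (by simpa using hzero)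
  have hweig : H *ᵥ w = E₀ • w := by
    have := hAmul w ▸ hAw
    exact sub_eq_zero.mp this
  refine ⟨⟨w, hw0, hweig, hwnn⟩, ?_⟩
  intro plus hplus
  have hc0 : (0:ℝ) < Real.sqrt (2 ^ n) := Real.sqrt_pos.mpr (by positivity)
  set c : ℝ := (Real.sqrt (2 ^ n))⁻¹ with hcdef
  have hc2 : c ^ 2 = ((2:ℝ) ^ n)⁻¹ := by
    rw [hcdef, inv_pow, Real.sq_sqrt (by positivity : (0:ℝ) ≤ 2 ^ n)]
  have hPw : P *ᵥ w = w := (hPfix w).mp hweig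
  have hPswap : ∀ a b : ((Fin n) → Bool) → ℝ, a ⬝ᵥ P *ᵥ b = (P *ᵥ a) ⬝ᵥ b := by
    intro a b
    rw [Matrix.dotProduct_mulVec, ← Matrix.mulVec_transpose, hPsym.eq]
  have hq : plus ⬝ᵥ P *ᵥ plus = ∑ x, (P *ᵥ plus) x ^ 2 := by
    calc plus ⬝ᵥ P *ᵥ plus = plus ⬝ᵥ (P * P) *ᵥ plus := by rw [hPP]
      _ = plus ⬝ᵥ P *ᵥ (P *ᵥ plus) := by rw [Matrix.mulVec_mulVec]
      _ = (P *ᵥ plus) ⬝ᵥ (P *ᵥ plus) := hPswap _ _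
      _ = ∑ x, (P *ᵥ plus) x ^ 2 := by simp [dotProduct, sq]
  set s : ℝ := ∑ x, w x with hsdef
  set t : ℝ := ∑ x, w x ^ 2 with htdef
  have ht0 : 0 < t := by
    obtain ⟨x0, hx0⟩ := Function.ne_iff.mp hw0
    have h1 : 0 < w x0 ^ 2 := pow_pos (lt_of_le_of_ne (hwnn x0) (Ne.symm hx0)) 2
    exact lt_of_lt_of_le h1 (Finset.single_le_sum (fun y _ => sq_nonneg (w y)) (Finset.mem_univ x0))
  have hts : t ≤ s ^ 2 := by
    have h1 : ∀ x ∈ Finset.univ, w x ^ 2 ≤ w x * s :=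
      fun x _ => by
        have hx : w x ≤ s := Finset.single_le_sum (fun y _ => hwnn y) (Finset.mem_univ x)
        calc w x ^ 2 = w x * w x := sq (w x) ▸ rfl
          _ ≤ w x * s := mul_le_mul_of_nonneg_left hx (hwnn x)
    calc t ≤ ∑ x, w x * s := Finset.sum_le_sum h1
      _ = s * s := by rw [← Finset.sum_mul]
      _ = s ^ 2 := (sq s).symm
  have hCS := Finset.sum_mul_sq_le_sq_mul_sq Finset.univ w (P *ᵥ plus)
  have hwp : ∑ x, w x * (P *ᵥ plus) x = c * s := by
    have h1 : (∑ x, w x * (P *ᵥ plus) x) = w ⬝ᵥ P *ᵥ plus := rfl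
    rw [h1, hPswap, hPw, hplus]
    show ∑ x, w x * c = c * s
    rw [← Finset.sum_mul, mul_comm, hsdef]
  have hmain : c ^ 2 ≤ plus ⬝ᵥ P *ᵥ plus := by
    rw [hwp, ← hq] at hCS
    have h2 : c ^ 2 * t ≤ c ^ 2 * s ^ 2 := mul_le_mul_of_nonneg_left hts (sq_nonneg c)
    have h3 : c ^ 2 * s ^ 2 ≤ t * (plus ⬝ᵥ P *ᵥ plus) := by
      calc c ^ 2 * s ^ 2 = (c * s) ^ 2 := by ring
        _ ≤ t * (plus ⬝ᵥ P *ᵥ plus) := hCS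
    have h4 : t * c ^ 2 ≤ t * (plus ⬝ᵥ P *ᵥ plus) := by linarith
    exact le_of_mul_le_mul_left h4 ht0
  have h1 : ((2:ℝ) ^ n)⁻¹ ≤ plus ⬝ᵥ P *ᵥ plus := hc2 ▸ hmain
  refine ⟨h1, ?_⟩
  have h2 := Real.sqrt_le_sqrt h1
  rwa [Real.sqrt_inv] at h2
end
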